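/- Let r be a maximal repetition in w. The number of maximal repetitions r' with minimal period p(r), |r'| ≥ |r|, and lb_g(r) ≤ beg(r') ≤ ub_f(r) is at most 1 + (ub_f(r) - lb_g(r))/(|r|/2), which is O(1 + Δ_{f,g} + ∂_{f,g}). -/

import Mathlib

variable {α : Type*}

/-- `w[k] = w[k+p]` for all positions `k` with `i ≤ k` and `k + p ≤ j`:
the factor `w[i..j]` has period `p`. -/
def HasPeriod (w : ℕ → α) (i j p : ℕ) : Prop :=
  ∀ k, i ≤ k → k + p ≤ j → w k = w (k + p)

/-- `p` is the minimal period of the factor `w[i..j]`. -/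
def IsMinPeriod (w : ℕ → α) (i j p : ℕ) : Prop :=
  0 < p ∧ HasPeriod w i j p ∧ ∀ q, 0 < q → HasPeriod w i j q → p ≤ q

/-- The factor `w[i..j]` is a repetition with minimal period `p`: its length
`j - i + 1` is at least `2p`. -/
def IsRepetition (w : ℕ → α) (i j p : ℕ) : Prop :=
  IsMinPeriod w i j p ∧ i + 2 * p ≤ j + 1

/-- The factor `w[i..j]` of the word `w[1..n]` is a maximal repetition with
minimal period `p`. -/
def IsMaxRepetition (w : ℕ → α) (n i j p : ℕ) : Prop :=
  1 ≤ i ∧ i ≤ j ∧ j ≤ n ∧ IsRepetition w i j p ∧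
  (1 < i → w (i - 1) ≠ w (i - 1 + p)) ∧ (j < n → w (j + 1 - p) ≠ w (j + 1))

/-- A gapped repeat with left copy starting at `s`, right copy starting at `t`,
copies of length `c`, and a nonempty gap. -/
def IsGappedRepeat (w : ℕ → α) (s t c : ℕ) : Prop :=
  0 < c ∧ s + c < t ∧ ∀ k, k < c → w (s + k) = w (t + k)

/-- A maximal gapped repeat in the word `w[1..n]`. -/
def IsMaxGappedRepeat (w : ℕ → α) (n s t c : ℕ) : Prop :=
  IsGappedRepeat w s t c ∧ 1 ≤ s ∧ t + c - 1 ≤ n ∧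
  (1 < s → w (s - 1) ≠ w (t - 1)) ∧
  (t + c - 1 < n → w (s + c) ≠ w (t + c))

lemma maxrep_close_eq {w : ℕ → α} {n i1 j1 i2 j2 p ℓ : ℕ}
    (h1 : IsMaxRepetition w n i1 j1 p) (h2 : IsMaxRepetition w n i2 j2 p)
    (hl1 : i1 + ℓ ≤ j1 + 1) (hl2 : i2 + ℓ ≤ j2 + 1)
    (hℓ : 2 * p < ℓ) (hle : i1 ≤ i2) (hclose : 2 * (i2 - i1) ≤ ℓ) :
    i1 = i2 ∧ j1 = j2 := by
  obtain ⟨hi1, hij1, hjn1, ⟨⟨hp, hper1, _⟩, hrep1⟩, hL1, hR1⟩ := h1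
  obtain ⟨hi2, hij2, hjn2, ⟨⟨_, hper2, _⟩, hrep2⟩, hL2, hR2⟩ := h2
  have hii : i1 = i2 := by
    by_contra hne
    have hlt : i1 < i2 := lt_of_le_of_ne hle hne
    have h1lt : 1 < i2 := lt_of_le_of_lt hi1 hlt
    exact hL2 h1lt (hper1 (i2 - 1) (by omega) (by omega))
  subst hii
  refine ⟨rfl, ?_⟩
  rcases lt_trichotomy j1 j2 with h | h | h
  · exfalso
    apply hR1 (by omega)
    have := hper2 (j1 + 1 - p) (by omega) (by omega)
    rwa [Nat.sub_add_cancel (by omega)] at this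
  · exact h
  · exfalso
    apply hR2 (by omega)
    have := hper1 (j2 + 1 - p) (by omega) (by omega)
    rwa [Nat.sub_add_cancel (by omega)] at this

lemma card_le_of_gaps {T : Finset ℕ} {L U d : ℝ} (hd : 0 < d) (hLU : L ≤ U)
    (hmem : ∀ a ∈ T, L ≤ (a : ℝ) ∧ (a : ℝ) ≤ U)
    (hgap : ∀ a ∈ T, ∀ b ∈ T, a < b → d < (b : ℝ) - a) :
    (T.card : ℝ) ≤ 1 + (U - L) / d := by
  have hdiv : (0:ℝ) ≤ (U - L) / d := div_nonneg (by linarith) hd.le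
  have key : ∀ a ∈ T, ∀ b ∈ T, a < b →
      Nat.floor (((a:ℝ) - L)/d) < Nat.floor (((b:ℝ) - L)/d) := by
    intro a ha b hb hab
    have h1 : (0:ℝ) ≤ ((a:ℝ) - L)/d := div_nonneg (by linarith [(hmem a ha).1]) hd.le
    have h2 : ((a:ℝ) - L)/d + 1 ≤ ((b:ℝ) - L)/d := by
      have := hgap a ha b hb hab
      rw [div_add' _ _ _ hd.ne', div_le_div_iff₀ hd hd]
      nlinarith
    calc Nat.floor (((a:ℝ) - L)/d) < Nat.floor (((a:ℝ) - L)/d) + 1 := Nat.lt_succ_self _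
    _ = Nat.floor (((a:ℝ) - L)/d + 1) := by rw [Nat.floor_add_one h1]
    _ ≤ Nat.floor (((b:ℝ) - L)/d) := Nat.floor_le_floor h2
  have hinj : Set.InjOn (fun a : ℕ => Nat.floor (((a:ℝ) - L)/d)) T := by
    intro a ha b hb hab
    rcases lt_trichotomy a b with h | h | h
    · exact absurd hab (key a ha b hb h).ne
    · exact h
    · exact absurd hab.symm (key b hb a ha h).ne
  have hsub : T.image (fun a : ℕ => Nat.floor (((a:ℝ) - L)/d)) ⊆
      Finset.range (Nat.floor ((U - L)/d) + 1) := by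
    intro m hm
    simp only [Finset.mem_image] at hm
    obtain ⟨a, ha, rfl⟩ := hm
    rw [Finset.mem_range, Nat.lt_succ_iff]
    exact Nat.floor_le_floor (by gcongr <;> linarith [(hmem a ha).2, hd])
  have := (Finset.card_image_of_injOn hinj).symm.trans_le
    ((Finset.card_le_card hsub).trans_eq (Finset.card_range _))
  calc (T.card : ℝ) ≤ (Nat.floor ((U - L)/d) + 1 : ℕ) := by exact_mod_cast this
  _ ≤ (U - L)/d + 1 := by push_cast; linarith [Nat.floor_le hdiv]
  _ = 1 + (U - L)/d := by ring

lemma f_step {f : ℕ → ℝ} {Df : ℝ} (hDf : ∀ x, f (x + 1) - f x ≤ Df) :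
    ∀ x y : ℕ, x ≤ y → f y - f x ≤ Df * ((y : ℝ) - x) := by
  intro x y hxy
  induction y, hxy using Nat.le_induction with
  | base => simp
  | succ m hm ih =>
    have := hDf m
    push_cast; push_cast at ih; linarith

lemma g_step {g : ℕ → ℝ} {Dg : ℝ} (hDg : ∀ x, g x - g (x + 1) ≤ Dg) :
    ∀ x y : ℕ, x ≤ y → g x - g y ≤ Dg * ((y : ℝ) - x) := by
  intro x y hxy
  induction y, hxy using Nat.le_induction with
  | base => simp
  | succ m hm ih =>
    have := hDg m
    push_cast; push_cast at ih; linarith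

/-- The number of maximal repetitions `r'` with minimal period `p(r)`, length
at least `|r|`, and `lb_g(r) ≤ beg r' ≤ ub_f(r)` is at most
`1 + (ub_f(r) - lb_g(r))/(|r|/2)`, which is `O(1 + Δ + ∂)`. -/
theorem generating_repetitions_count (w : ℕ → α) (n i j p : ℕ)
    (f g : ℕ → ℝ) (Df Dg Δ : ℝ)
    (hr : IsMaxRepetition w n i j p)
    (h2p : 2 * p < j + 1 - i)
    (hfg : ∀ x, g x ≤ f x)
    (hDf : ∀ x, max (f (x + 1) - f x) 0 ≤ Df)
    (hDg : ∀ x, max (g x - g (x + 1)) 0 ≤ Dg)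
    (hΔ : ∀ x, 0 < x → (f x - g x) / x ≤ Δ) :
    let hne : (Finset.Ico (2 * p) (j + 1 - i)).Nonempty :=
      Finset.nonempty_Ico.mpr h2p
    let L : ℝ :=
      (i : ℝ) + (Finset.Ico (2 * p) (j + 1 - i)).inf' hne fun x => (x : ℝ) + g x
    let U : ℝ :=
      (i : ℝ) + (Finset.Ico (2 * p) (j + 1 - i)).sup' hne fun x => (x : ℝ) + f x
    let S : Set (ℕ × ℕ) := {ab | IsMaxRepetition w n ab.1 ab.2 p ∧
      j + 1 - i ≤ ab.2 + 1 - ab.1 ∧ L ≤ (ab.1 : ℝ) ∧ (ab.1 : ℝ) ≤ U}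
    (S.ncard : ℝ) ≤ 1 + (U - L) / (((j + 1 - i : ℕ) : ℝ) / 2) ∧
      (S.ncard : ℝ) ≤ 3 + 2 * (Δ + max Df Dg) := by
  intro hne L U S
  have hp : 0 < p := hr.2.2.2.1.1.1
  set ℓ : ℕ := j + 1 - i with hℓdef
  have hℓpos : 0 < ℓ := by omega
  have hℓR : (0:ℝ) < (ℓ:ℝ) := by exact_mod_cast hℓpos
  have hDf' : ∀ x, f (x + 1) - f x ≤ Df := fun x => le_trans (le_max_left _ _) (hDf x)
  have hDg' : ∀ x, g x - g (x + 1) ≤ Dg := fun x => le_trans (le_max_left _ _) (hDg x)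
  have hDfnn : 0 ≤ Df := le_trans (le_max_right _ _) (hDf 0)
  have hDgnn : 0 ≤ Dg := le_trans (le_max_right _ _) (hDg 0)
  have hΔnn : 0 ≤ Δ := by
    refine le_trans ?_ (hΔ 1 one_pos)
    exact div_nonneg (by linarith [hfg 1]) (by norm_num)
  -- inf and sup attained
  obtain ⟨x2, hx2, hinf⟩ := Finset.exists_mem_eq_inf' hne (fun x => (x : ℝ) + g x)
  obtain ⟨x1, hx1, hsup⟩ := Finset.exists_mem_eq_sup' hne (fun x => (x : ℝ) + f x)
  rw [Finset.mem_Ico] at hx1 hx2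
  have hUL : L ≤ U := by
    have h1 : (x2:ℝ) + f x2 ≤ (Finset.Ico (2*p) ℓ).sup' hne fun x => (x:ℝ) + f x := by
      exact Finset.le_sup' (fun x : ℕ => (x:ℝ) + f x) (Finset.mem_Ico.mpr hx2)
    have h2 := hfg x2
    simp only [L, U, hinf]
    linarith
  -- key bound on U - L
  have hkey : U - L ≤ (ℓ:ℝ) * (1 + Δ + max Df Dg) := by
    have hmaxf : Df ≤ max Df Dg := le_max_left _ _
    have hmaxg : Dg ≤ max Df Dg := le_max_right _ _
    have hx1R : (x1:ℝ) < ℓ := by exact_mod_cast hx1.2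
    have hx2R : (x2:ℝ) < ℓ := by exact_mod_cast hx2.2
    have hUL' : U - L = ((x1:ℝ) + f x1) - ((x2:ℝ) + g x2) := by
      simp only [L, U, ← hℓdef, hinf, hsup]; ring
    rcases le_or_gt x2 x1 with hcase | hcase
    · have hstep := f_step hDf' x2 x1 hcase
      have hΔ2 : f x2 - g x2 ≤ Δ * x2 := by
        have := hΔ x2 (by omega)
        rw [div_le_iff₀ (by exact_mod_cast (by omega : 0 < x2))] at this
        linarith
      have hx2R' : (x2:ℝ) ≤ x1 := by exact_mod_cast hcase
      have hx2nn : (0:ℝ) ≤ x2 := Nat.cast_nonneg _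
      have hM : 0 ≤ max Df Dg := le_trans hDfnn hmaxf
      rw [hUL']
      nlinarith [mul_nonneg hΔnn (sub_nonneg.mpr hx2R'),
        mul_nonneg hM hx2nn,
        mul_le_mul_of_nonneg_right hmaxf (sub_nonneg.mpr hx2R'),
        mul_le_mul_of_nonneg_left hx1R.le (by linarith : (0:ℝ) ≤ 1 + Δ + max Df Dg)]
    · have hstep := g_step hDg' x1 x2 hcase.le
      have hΔ1 : f x1 - g x1 ≤ Δ * x1 := by
        have := hΔ x1 (by omega)
        rw [div_le_iff₀ (by exact_mod_cast (by omega : 0 < x1))] at this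
        linarith
      have hx1R' : (x1:ℝ) ≤ x2 := by exact_mod_cast hcase.le
      have hx1nn : (0:ℝ) ≤ x1 := Nat.cast_nonneg _
      have hM : 0 ≤ max Df Dg := le_trans hDgnn hmaxg
      rw [hUL']
      nlinarith [mul_nonneg hΔnn (sub_nonneg.mpr hx1R'),
        mul_nonneg hM hx1nn,
        mul_le_mul_of_nonneg_right hmaxg (sub_nonneg.mpr hx1R'),
        mul_le_mul_of_nonneg_left hx2R.le (by linarith : (0:ℝ) ≤ 1 + Δ + max Df Dg)]
  -- finiteness of S
  have hfin : S.Finite := by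
    apply Set.Finite.subset (Set.finite_Icc (1,1) (n,n))
    rintro ⟨a, b⟩ ⟨hmr, -, -, -⟩
    obtain ⟨h1, h2, h3, -⟩ := hmr
    exact Set.mem_Icc.mpr ⟨⟨h1, le_trans h1 h2⟩, ⟨le_trans h2 h3, h3⟩⟩
  set T : Finset (ℕ × ℕ) := hfin.toFinset with hT
  have hcard : S.ncard = T.card := Set.ncard_eq_toFinset_card S hfin
  -- first-coordinate injectivity
  have hfst : ∀ ab ∈ S, ∀ cd ∈ S, ab.1 = cd.1 → ab = cd := by
    rintro ⟨a, b⟩ ⟨hmr1, hl1, -, -⟩ ⟨c, d⟩ ⟨hmr2, hl2, -, -⟩ h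
    simp only at h
    subst h
    have hab : a ≤ b := hmr1.2.1
    have hcd : a ≤ d := hmr2.2.1
    obtain ⟨-, h2⟩ := maxrep_close_eq hmr1 hmr2 (by omega) (by omega) h2p le_rfl (by omega)
    exact Prod.ext rfl h2
  set T' : Finset ℕ := T.image Prod.fst with hT'
  have hinjT : Set.InjOn Prod.fst (↑T : Set (ℕ × ℕ)) := by
    intro a ha b hb hE
    exact hfst a (hfin.mem_toFinset.mp ha) b (hfin.mem_toFinset.mp hb) hE
  have hcard' : T.card = T'.card := (Finset.card_image_of_injOn hinjT).symm
  -- membership bounds and gaps for T'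
  have hmemT' : ∀ a ∈ T', L ≤ (a:ℝ) ∧ (a:ℝ) ≤ U := by
    intro a ha
    obtain ⟨ab, hab, rfl⟩ := Finset.mem_image.mp ha
    obtain ⟨-, -, h3, h4⟩ := hfin.mem_toFinset.mp hab
    exact ⟨h3, h4⟩
  have hgapT' : ∀ a ∈ T', ∀ b ∈ T', a < b → (ℓ:ℝ)/2 < (b:ℝ) - a := by
    intro a ha b hb hab
    obtain ⟨ab, habm, rfl⟩ := Finset.mem_image.mp ha
    obtain ⟨cd, hcdm, rfl⟩ := Finset.mem_image.mp hb
    obtain ⟨hmr1, hl1, -, -⟩ := hfin.mem_toFinset.mp habm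
    obtain ⟨hmr2, hl2, -, -⟩ := hfin.mem_toFinset.mp hcdm
    have hab1 : ab.1 ≤ ab.2 := hmr1.2.1
    have hcd1 : cd.1 ≤ cd.2 := hmr2.2.1
    by_contra hcon
    push_neg at hcon
    have hclose : 2 * (cd.1 - ab.1) ≤ ℓ := by
      have : 2 * ((cd.1:ℝ) - ab.1) ≤ ℓ := by linarith
      have h2 : ((2 * (cd.1 - ab.1) : ℕ) : ℝ) ≤ (ℓ:ℝ) := by
        push_cast [Nat.cast_sub hab.le]
        linarith
      exact_mod_cast h2
    have := maxrep_close_eq hmr1 hmr2 (by omega) (by omega) h2p hab.le hclose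
    omega
  have hd2 : (0:ℝ) < (ℓ:ℝ)/2 := by linarith
  have hbound1 : ((S.ncard : ℕ) : ℝ) ≤ 1 + (U - L) / ((ℓ:ℝ)/2) := by
    rw [hcard, hcard']
    exact card_le_of_gaps hd2 hUL hmemT' hgapT'
  refine ⟨hbound1, ?_⟩
  refine le_trans hbound1 ?_
  have : (U - L) / ((ℓ:ℝ)/2) ≤ 2 * (1 + Δ + max Df Dg) := by
    rw [div_le_iff₀ hd2]
    calc U - L ≤ (ℓ:ℝ) * (1 + Δ + max Df Dg) := hkey
    _ = 2 * (1 + Δ + max Df Dg) * ((ℓ:ℝ)/2) := by ring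
  linarith
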